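/- Let s : (R₀,∞) → (0,∞) be convex and differentiable with r < s(r) ≤ r² for all r ≥ R₀ and lim_{r→∞} s(r)/r = ∞. Then s(r) ≤ 2·s(r-1) for all sufficiently large r. -/
import Mathlib


open Set Filter

/-- If `s` is convex and differentiable on `(R₀,∞)` with `r < s(r) ≤ r²` and
`s(r)/r → ∞`, then `s(r) ≤ 2 s(r-1)` for all sufficiently large `r`. -/
theorem convex_doubling (R₀ : ℝ) (s : ℝ → ℝ)
    (hconv : ConvexOn ℝ (Ioi R₀) s)
    (hdiff : DifferentiableOn ℝ s (Ioi R₀))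
    (hbound : ∀ r ≥ R₀, r < s r ∧ s r ≤ r ^ 2)
    (hlim : Tendsto (fun r => s r / r) atTop atTop) :
    ∀ᶠ r in atTop, s r ≤ 2 * s (r - 1) := by
  obtain ⟨X, hX⟩ := (tendsto_atTop.mp hlim 5).exists_forall_of_atTop
  filter_upwards [eventually_ge_atTop (max (max X 5) (R₀ + 2) + 1)] with r hr
  have hr5 : r ≥ 5 := le_trans (le_trans (le_max_right X 5) (le_max_left _ _))
    (le_trans (le_add_of_nonneg_right one_pos.le) hr)
  have hrR : r - 1 > R₀ := by
    have : R₀ + 2 ≤ r := le_trans (le_trans (le_max_right _ _) (le_add_of_nonneg_right one_pos.le)) hr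
    linarith
  have hrX : r - 1 ≥ X := by
    have : X ≤ max (max X 5) (R₀ + 2) := le_trans (le_max_left _ _) (le_max_left _ _)
    linarith
  have hr0 : (0:ℝ) < r := by linarith
  have h2r : r < 2 * r := by linarith
  have hm : r - 1 < r := by linarith
  have h2rR : (2 * r) ∈ Ioi R₀ := by simp only [mem_Ioi]; linarith
  have hslope := hconv.slope_mono_adjacent (x := r - 1) (y := r) (z := 2 * r)
    (by simpa using hrR) h2rR hm h2r
  have hsr1 : s (r - 1) ≥ 5 * (r - 1) := by
    have h := hX (r - 1) hrX
    have hpos : (0:ℝ) < r - 1 := by linarith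
    have := (le_div_iff₀ hpos).mp h
    linarith
  have hb2r := hbound (2 * r) (by linarith)
  have hbr := hbound r (by linarith)
  have key : s r - s (r - 1) ≤ 4 * r := by
    have h1 : (s r - s (r - 1)) / (r - (r - 1)) ≤ (s (2 * r) - s r) / (2 * r - r) := hslope
    have h2 : (s (2 * r) - s r) / r ≤ 4 * r := by
      rw [div_le_iff₀ hr0]
      have h6 : s (2 * r) ≤ (2 * r) ^ 2 := hb2r.2
      have h7 : 0 < s r := lt_trans hr0 hbr.1
      nlinarith
    have h4 : r - (r - 1) = 1 := by ring
    have h5 : 2 * r - r = r := by ring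
    rw [h4, h5, div_one] at h1
    linarith
  linarith
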